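/- Consider the constrained differential inclusion Σ and a closed set K ⊆ ℝⁿ such that Assumptions 1, 2 and 3 hold. Let φ be a solution of Σ starting from x ∈ 𝒫 that leaves K immediately. Then cl(F_φ(x)) ⊆ T_{∂K ∩ C}(x) \ T_{∂K \ int(C)}(x). -/

import Mathlib

open MeasureTheory Filter Topology Set
open scoped RealInnerProductSpace

/-- Euclidean space ℝⁿ. -/
abbrev Euc (n : ℕ) := EuclideanSpace ℝ (Fin n)

variable {E : Type*} [NormedAddCommGroup E] [InnerProductSpace ℝ E]

/-- The contingent (Bouligand) cone to `S` at `x`: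
`v` belongs to it iff there are sequences `tᵢ → 0⁺` and `vᵢ → v` with `x + tᵢ • vᵢ ∈ S`. -/
def contingentCone (S : Set E) (x : E) : Set E :=
  {v | ∃ t : ℕ → ℝ, ∃ w : ℕ → E,
    (∀ i, 0 < t i) ∧ Tendsto t atTop (𝓝 0) ∧ Tendsto w atTop (𝓝 v) ∧
    ∀ i, x + t i • w i ∈ S}

/-- The adjacent cone to `S` at `x`:
`v` belongs to it iff for every sequence `tᵢ → 0⁺` there is `vᵢ → v` with `x + tᵢ • vᵢ ∈ S`. -/
def adjacentCone (S : Set E) (x : E) : Set E :=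
  {v | ∀ t : ℕ → ℝ, (∀ i, 0 < t i) → Tendsto t atTop (𝓝 0) →
    ∃ w : ℕ → E, Tendsto w atTop (𝓝 v) ∧ ∀ i, x + t i • w i ∈ S}

/-- The Dubovitskiy cone to `S` at `x`. -/
def dubovitskiyCone (S : Set E) (x : E) : Set E :=
  {v | ∀ t : ℕ → ℝ, ∀ w : ℕ → E, (∀ i, 0 < t i) → Tendsto t atTop (𝓝 0) →
    Tendsto w atTop (𝓝 v) → ∀ᶠ i in atTop, x + t i • w i ∈ interior S}

/-- Lower semicontinuity of a set-valued map at a point along a filter `l`. -/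
def SVLowerSemicontinuousAt (F : E → Set E) (l : Filter E) (x : E) : Prop :=
  ∀ U : Set E, IsOpen U → (F x ∩ U).Nonempty → ∀ᶠ y in l, (F y ∩ U).Nonempty

/-- Upper semicontinuity of a set-valued map at a point along a filter `l`. -/
def SVUpperSemicontinuousAt (F : E → Set E) (l : Filter E) (x : E) : Prop :=
  ∀ U : Set E, IsOpen U → F x ⊆ U → ∀ᶠ y in l, F y ⊆ U

/-- Continuity (lower and upper semicontinuity) of a set-valued map at `x` along `l`. -/
def SVContinuousAt (F : E → Set E) (l : Filter E) (x : E) : Prop :=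
  SVLowerSemicontinuousAt F l x ∧ SVUpperSemicontinuousAt F l x

/-- Continuity of a set-valued map. -/
def SVContinuous (F : E → Set E) : Prop := ∀ x, SVContinuousAt F (𝓝 x) x

/-- Local boundedness of a set-valued map. -/
def SVLocallyBounded (F : E → Set E) : Prop :=
  ∀ x : E, ∃ N ∈ 𝓝 x, ∃ M : ℝ, ∀ y ∈ N, ∀ v ∈ F y, ‖v‖ ≤ M

/-- One-sided local Lipschitz continuity of a set-valued map. -/
def OneSidedLocallyLipschitz (F : E → Set E) : Prop :=
  ∀ N : Set E, N.Nonempty → IsCompact N → ∃ k > 0, ∀ x₁ ∈ N, ∀ x₂ ∈ N,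
    ∀ w₁ ∈ F x₁, ∃ w₂ ∈ F x₂, ⟪x₁ - x₂, w₁⟫ ≤ ⟪x₁ - x₂, w₂⟫ + k * ‖x₁ - x₂‖ ^ 2

/-- The standing assumption (SA): `C` closed; `F x` nonempty, closed, convex on `C`;
`F` continuous and one-sided locally Lipschitz. -/
structure StandingAssumption (F : E → Set E) (C : Set E) : Prop where
  closed_C : IsClosed C
  nonempty_images : ∀ x ∈ C, (F x).Nonempty
  closed_images : ∀ x ∈ C, IsClosed (F x)
  convex_images : ∀ x ∈ C, Convex ℝ (F x)
  continuous : SVContinuous F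
  osLipschitz : OneSidedLocallyLipschitz F

/-- Admissible solution domains: `[0,T]` with `T ≥ 0`, or `[0,T)` with `T ∈ (0,∞]`. -/
def IsSolDomain (D : Set ℝ) : Prop :=
  (∃ T : ℝ, 0 ≤ T ∧ D = Icc 0 T) ∨ (∃ T : ℝ, 0 < T ∧ D = Ico 0 T) ∨ D = Ici 0

/-- `φ` is a solution of the constrained differential inclusion `ẋ ∈ F(x)`, `x ∈ C`,
on the domain `D`: it stays in `C` and is a locally absolutely continuous arc whose
derivative is an integrable selection of `F ∘ φ` almost everywhere. -/
def IsSolution (F : E → Set E) (C : Set E) (D : Set ℝ) (φ : ℝ → E) : Prop :=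
  IsSolDomain D ∧ (∀ t ∈ D, φ t ∈ C) ∧
  ∃ g : ℝ → E,
    (∀ᵐ t ∂(volume.restrict D), g t ∈ F (φ t)) ∧
    ∀ t ∈ D, IntervalIntegrable g volume 0 t ∧ φ t = φ 0 + ∫ s in (0:ℝ)..t, g s

/-- Forward invariance of `K` for the constrained differential inclusion. -/
def ForwardInvariant (F : E → Set E) (C K : Set E) : Prop :=
  ∀ D : Set ℝ, ∀ φ : ℝ → E, IsSolution F C D φ → φ 0 ∈ K → ∀ t ∈ D, φ t ∈ K

/-- The set 𝒫 of critical points: points of `∂K ∩ ∂C` every neighborhood of which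
meets `C \ K`. -/
def critSet (K C : Set E) : Set E :=
  {x | x ∈ frontier K ∩ frontier C ∧ ∀ N ∈ 𝓝 x, (N ∩ (C \ K)).Nonempty}

/-- The set of initial speeds `F_φ(x)` of an arc `φ` at `x`. -/
def initialSpeeds (φ : ℝ → E) (x : E) : Set E :=
  {v | ∃ t : ℕ → ℝ, (∀ i, 0 < t i) ∧ Tendsto t atTop (𝓝 0) ∧
    Tendsto (fun i => (t i)⁻¹ • (φ (t i) - x)) atTop (𝓝 v)}

/-- The metric projection of `y` onto `S`. -/
def projSet (S : Set E) (y : E) : Set E := {z ∈ S | dist y z = Metric.infDist y S}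

/-- `φ` leaves `K` immediately: for some `T > 0`, `φ(t) ∈ C \ K` on `(0,T]`. -/
def LeavesImmediately (K C : Set E) (D : Set ℝ) (φ : ℝ → E) : Prop :=
  ∃ T > 0, Ioc 0 T ⊆ D ∧ ∀ t ∈ Ioc 0 T, φ t ∈ C \ K

/-- Property (★): for some `T > 0`, `Proj_{∂K}(φ(t)) ∩ int C ≠ ∅` on `(0,T]`. -/
def PropStar (K C : Set E) (D : Set ℝ) (φ : ℝ → E) : Prop :=
  ∃ T > 0, Ioc 0 T ⊆ D ∧
    ∀ t ∈ Ioc 0 T, (projSet (frontier K) (φ t) ∩ interior C).Nonempty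

/-- Euclidean norm of the concatenated vector `(v₁, v₂) ∈ ℝ²ⁿ`. -/
noncomputable def pairNorm (v₁ v₂ : E) : ℝ := Real.sqrt (‖v₁‖ ^ 2 + ‖v₂‖ ^ 2)

/-- Assumption 1: `F(x) ⊆ T_K(x)` on 𝒫. -/
def Assumption1 (F : E → Set E) (K C : Set E) : Prop :=
  ∀ x ∈ critSet K C, F x ⊆ contingentCone K x

/-- Assumption 2: `F(x) ∩ T_{∂K ∩ ∂C}(x) = ∅` on 𝒫. -/
def Assumption2 (F : E → Set E) (K C : Set E) : Prop :=
  ∀ x ∈ critSet K C, F x ∩ contingentCone (frontier K ∩ frontier C) x = ∅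

/-- Assumption 3 (transversality) at a point `x`. -/
def Assumption3At (K C : Set E) (x : E) : Prop :=
  contingentCone (frontier K) x = adjacentCone (frontier K) x ∧
  contingentCone C x = adjacentCone C x ∧
  ∃ N ∈ 𝓝 x, ∃ c > 0, ∃ α ∈ Ico (0:ℝ) 1,
    ∀ x₁ ∈ (frontier K \ C) ∩ N, ∀ x₂ ∈ (frontier C \ frontier K) ∩ N,
      ∃ v₁ ∈ contingentCone (frontier K) x₁, ∃ v₂ ∈ contingentCone C x₂,
        pairNorm v₁ v₂ ≤ c * ‖x₁ - x₂‖ ∧ ‖(x₂ - x₁) - (v₁ - v₂)‖ ≤ α * ‖x₁ - x₂‖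

/-- Assumption 3 (transversality) on 𝒫. -/
def Assumption3 (K C : Set E) : Prop := ∀ x ∈ critSet K C, Assumption3At K C x

/-- The transversality condition (◇) for a pair of sets at `x₀`. -/
def TransversalAt (K₁ K₂ : Set E) (x₀ : E) : Prop :=
  ∃ N ∈ 𝓝 x₀, ∃ c > 0, ∃ α ∈ Ico (0:ℝ) 1,
    ∀ x₁ ∈ (frontier K₁ \ K₂) ∩ N, ∀ x₂ ∈ (frontier K₂ \ K₁) ∩ N,
      ∃ v₁ ∈ contingentCone K₁ x₁, ∃ v₂ ∈ contingentCone K₂ x₂,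
        pairNorm v₁ v₂ ≤ c * ‖x₁ - x₂‖ ∧ ‖(x₂ - x₁) - (v₁ - v₂)‖ ≤ α * ‖x₁ - x₂‖

section AuxCones

variable {E : Type*} [NormedAddCommGroup E] [InnerProductSpace ℝ E]

lemma mem_contingentCone_of_eventually {S : Set E} {x v : E} {t : ℕ → ℝ} {w : ℕ → E}
    (ht : ∀ᶠ i in atTop, 0 < t i) (ht0 : Tendsto t atTop (𝓝 0))
    (hw : Tendsto w atTop (𝓝 v)) (hS : ∀ᶠ i in atTop, x + t i • w i ∈ S) :
    v ∈ contingentCone S x := by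
  obtain ⟨N, hN⟩ := eventually_atTop.mp (ht.and hS)
  exact ⟨fun i => t (i + N), fun i => w (i + N),
    fun i => (hN _ (Nat.le_add_left N i)).1,
    ht0.comp (tendsto_add_atTop_nat N), hw.comp (tendsto_add_atTop_nat N),
    fun i => (hN _ (Nat.le_add_left N i)).2⟩

lemma mem_contingentCone_of_frequently {S : Set E} {x v : E} {t : ℕ → ℝ} {w : ℕ → E}
    (ht : ∀ i, 0 < t i) (ht0 : Tendsto t atTop (𝓝 0)) (hw : Tendsto w atTop (𝓝 v))
    (hS : ∃ᶠ i in atTop, x + t i • w i ∈ S) : v ∈ contingentCone S x := by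
  obtain ⟨ψ, hψ, hmem⟩ := Filter.extraction_of_frequently_atTop hS
  exact ⟨t ∘ ψ, w ∘ ψ, fun i => ht _, ht0.comp hψ.tendsto_atTop,
    hw.comp hψ.tendsto_atTop, hmem⟩

lemma closure_initialSpeeds_subset (φ : ℝ → E) (x : E) :
    closure (initialSpeeds φ x) ⊆ initialSpeeds φ x := by
  intro v hv
  obtain ⟨u, hu, huv⟩ := mem_closure_iff_seq_limit.mp hv
  have H : ∀ k : ℕ, ∃ r : ℝ, 0 < r ∧ r < 1 / ((k : ℝ) + 1) ∧
      dist (r⁻¹ • (φ r - x)) (u k) < 1 / ((k : ℝ) + 1) := by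
    intro k
    obtain ⟨t, ht, ht0, hq⟩ := hu k
    have hpos : (0:ℝ) < 1 / ((k : ℝ) + 1) := by positivity
    have h1 : ∀ᶠ i in atTop, t i < 1 / ((k : ℝ) + 1) :=
      ht0.eventually_mem (Iio_mem_nhds hpos)
    have h2 : ∀ᶠ i in atTop, dist ((t i)⁻¹ • (φ (t i) - x)) (u k) < 1 / ((k : ℝ) + 1) :=
      hq.eventually_mem (Metric.ball_mem_nhds _ hpos)
    obtain ⟨i, hi1, hi2⟩ := (h1.and h2).exists
    exact ⟨t i, ht i, hi1, hi2⟩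
  choose r hr0 hrs hrd using H
  refine ⟨r, hr0, ?_, ?_⟩
  · exact squeeze_zero (fun k => (hr0 k).le) (fun k => (hrs k).le)
      tendsto_one_div_add_atTop_nhds_zero_nat
  · rw [tendsto_iff_dist_tendsto_zero]
    refine squeeze_zero (fun k => dist_nonneg) (fun k => ?_)
      (by
        have h := tendsto_one_div_add_atTop_nhds_zero_nat.add
          (tendsto_iff_dist_tendsto_zero.mp huv)
        rwa [add_zero] at h)
    calc dist ((r k)⁻¹ • (φ (r k) - x)) v
        ≤ dist ((r k)⁻¹ • (φ (r k) - x)) (u k) + dist (u k) v := dist_triangle _ _ _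
      _ ≤ 1 / ((k : ℝ) + 1) + dist (u k) v := by linarith [hrd k]

lemma exists_frontier_crossing {K : Set E} (hK : IsClosed K) {a b : E}
    (ha : a ∈ K) (hb : b ∉ K) :
    ∃ θ : ℝ, θ ∈ Ico (0:ℝ) 1 ∧ a + θ • (b - a) ∈ frontier K := by
  set f : ℝ → E := fun θ => a + θ • (b - a) with hfdef
  have hfc : Continuous f := by fun_prop
  set S : Set ℝ := Icc (0:ℝ) 1 ∩ f ⁻¹' K with hSdef
  have hS0 : (0:ℝ) ∈ S := ⟨⟨le_refl 0, zero_le_one⟩, by simp [f, ha]⟩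
  have hScomp : IsCompact S := isCompact_Icc.inter_right (hK.preimage hfc)
  have hθS : sSup S ∈ S := hScomp.sSup_mem ⟨0, hS0⟩
  set θ : ℝ := sSup S with hθdef
  have hbdd : BddAbove S := ⟨1, fun y hy => hy.1.2⟩
  have hf1 : f 1 = b := by simp [f]
  have hθ1 : θ < 1 := by
    rcases lt_or_eq_of_le hθS.1.2 with h | h
    · exact h
    · exfalso; apply hb; rw [← hf1]; rw [h] at hθS; exact hθS.2
  refine ⟨θ, ⟨hθS.1.1, hθ1⟩, ?_⟩
  rw [frontier_eq_closure_inter_closure]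
  refine ⟨subset_closure hθS.2, ?_⟩
  -- approach from above
  have hseq : Tendsto (fun k : ℕ => θ + (1 - θ) / ((k:ℝ) + 1)) atTop (𝓝 θ) := by
    have h := (tendsto_const_nhds (x := θ)).add
      (tendsto_one_div_add_atTop_nhds_zero_nat.const_mul (1 - θ))
    simp only [mul_zero, add_zero] at h
    refine h.congr fun k => ?_
    rw [mul_one_div]
  have hmem : ∀ k : ℕ, f (θ + (1 - θ) / ((k:ℝ) + 1)) ∈ Kᶜ := by
    intro k
    have hk1 : (0:ℝ) < (k:ℝ) + 1 := by positivity
    have hgt : θ < θ + (1 - θ) / ((k:ℝ) + 1) := by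
      have : 0 < (1 - θ) / ((k:ℝ) + 1) := by
        apply div_pos (by linarith) hk1
      linarith
    have hle1 : θ + (1 - θ) / ((k:ℝ) + 1) ≤ 1 := by
      have h2 : (1 - θ) / ((k:ℝ) + 1) ≤ (1 - θ) / 1 := by
        apply div_le_div_of_nonneg_left (by linarith) one_pos (by linarith)
      have : (1-θ)/1 = 1 - θ := by ring
      linarith [h2.trans_eq this]
    intro hmemK
    have : θ + (1 - θ) / ((k:ℝ) + 1) ∈ S := ⟨⟨by linarith [hθS.1.1], hle1⟩, hmemK⟩
    exact absurd (le_csSup hbdd this) (not_le.mpr hgt)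
  exact mem_closure_of_tendsto (hfc.continuousAt.tendsto.comp hseq)
    (Eventually.of_forall hmem)

end AuxCones
section AuxCross

variable {E : Type*} [NormedAddCommGroup E] [InnerProductSpace ℝ E]

lemma mem_contingent_frontier_of_inner_outer {K : Set E} (hK : IsClosed K) {x v : E}
    (hvK : v ∈ contingentCone K x)
    {t : ℕ → ℝ} {w : ℕ → E} (ht : ∀ i, 0 < t i) (ht0 : Tendsto t atTop (𝓝 0))
    (hw : Tendsto w atTop (𝓝 v)) (hout : ∀ i, x + t i • w i ∉ K) :
    v ∈ contingentCone (frontier K) x := by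
  obtain ⟨s, u, hs, hs0, hu, huK⟩ := hvK
  have H : ∀ j : ℕ, ∃ i : ℕ, t i ≤ s j ∧ ‖w i - v‖ < 1 / ((j:ℝ) + 1) := by
    intro j
    have h1 : ∀ᶠ i in atTop, t i < s j := ht0.eventually_mem (Iio_mem_nhds (hs j))
    have h2 : ∀ᶠ i in atTop, ‖w i - v‖ < 1 / ((j:ℝ) + 1) := by
      have : Tendsto (fun i => ‖w i - v‖) atTop (𝓝 0) := by
        rw [← tendsto_iff_norm_sub_tendsto_zero]; exact hw
      exact this.eventually_mem (Iio_mem_nhds (by positivity))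
    obtain ⟨i, hi1, hi2⟩ := (h1.and h2).exists
    exact ⟨i, hi1.le, hi2⟩
  choose I hIt hIw using H
  have cross : ∀ j : ℕ, ∃ θ : ℝ, θ ∈ Ico (0:ℝ) 1 ∧
      (x + s j • u j) + θ • ((x + t (I j) • w (I j)) - (x + s j • u j)) ∈ frontier K :=
    fun j => exists_frontier_crossing hK (huK j) (hout (I j))
  choose θ hθI hθF using cross
  set c1 : ℕ → ℝ := fun j => (1 - θ j) * s j with hc1
  set c2 : ℕ → ℝ := fun j => θ j * t (I j) with hc2
  set μ : ℕ → ℝ := fun j => c1 j + c2 j with hμ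
  have hc1pos : ∀ j, 0 < c1 j := fun j => mul_pos (by linarith [(hθI j).2]) (hs j)
  have hc2nn : ∀ j, 0 ≤ c2 j := fun j => mul_nonneg (hθI j).1 (ht _).le
  have hμpos : ∀ j, 0 < μ j := fun j => lt_of_lt_of_le (hc1pos j) (le_add_of_nonneg_right (hc2nn j))
  set d : ℕ → E := fun j => (μ j)⁻¹ • (c1 j • u j + c2 j • w (I j)) with hd
  have hpt : ∀ j, x + μ j • d j ∈ frontier K := by
    intro j
    have e1 : μ j • d j = c1 j • u j + c2 j • w (I j) := by
      rw [hd]; exact smul_inv_smul₀ (hμpos j).ne' _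
    have e2 : x + μ j • d j =
        (x + s j • u j) + θ j • ((x + t (I j) • w (I j)) - (x + s j • u j)) := by
      rw [e1, hc1, hc2]; simp only; module
    rw [e2]; exact hθF j
  have hdiff : ∀ j, d j - v = (μ j)⁻¹ • (c1 j • (u j - v) + c2 j • (w (I j) - v)) := by
    intro j
    have key : (μ j)⁻¹ • ((c1 j + c2 j) • v) = v := by
      rw [smul_smul, inv_mul_cancel₀ (hμpos j).ne', one_smul]
    calc d j - v = (μ j)⁻¹ • (c1 j • u j + c2 j • w (I j)) - (μ j)⁻¹ • ((c1 j + c2 j) • v) := by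
          rw [key]
      _ = (μ j)⁻¹ • (c1 j • (u j - v) + c2 j • (w (I j) - v)) := by
          rw [← smul_sub]; congr 1; module
  have hdnorm : ∀ j, ‖d j - v‖ ≤ ‖u j - v‖ + ‖w (I j) - v‖ := by
    intro j
    rw [hdiff j]
    calc ‖(μ j)⁻¹ • (c1 j • (u j - v) + c2 j • (w (I j) - v))‖
        = (μ j)⁻¹ * ‖c1 j • (u j - v) + c2 j • (w (I j) - v)‖ := by
          rw [norm_smul, Real.norm_eq_abs, abs_of_pos (inv_pos.mpr (hμpos j))]
      _ ≤ (μ j)⁻¹ * (c1 j * ‖u j - v‖ + c2 j * ‖w (I j) - v‖) := by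
          apply mul_le_mul_of_nonneg_left _ (inv_pos.mpr (hμpos j)).le
          refine (norm_add_le _ _).trans ?_
          rw [norm_smul, norm_smul, Real.norm_eq_abs, Real.norm_eq_abs,
            abs_of_pos (hc1pos j), abs_of_nonneg (hc2nn j)]
      _ = ((μ j)⁻¹ * c1 j) * ‖u j - v‖ + ((μ j)⁻¹ * c2 j) * ‖w (I j) - v‖ := by ring
      _ ≤ 1 * ‖u j - v‖ + 1 * ‖w (I j) - v‖ := by
          gcongr
          · rw [inv_mul_le_iff₀ (hμpos j), mul_one]
            exact le_add_of_nonneg_right (hc2nn j)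
          · rw [inv_mul_le_iff₀ (hμpos j), mul_one]
            exact le_add_of_nonneg_left (hc1pos j).le
      _ = ‖u j - v‖ + ‖w (I j) - v‖ := by ring
  have hdten : Tendsto d atTop (𝓝 v) := by
    rw [tendsto_iff_norm_sub_tendsto_zero]
    refine squeeze_zero (fun j => norm_nonneg _) hdnorm ?_
    have h1 : Tendsto (fun j => ‖u j - v‖) atTop (𝓝 0) := by
      rw [← tendsto_iff_norm_sub_tendsto_zero]; exact hu
    have h2 : Tendsto (fun j => ‖w (I j) - v‖) atTop (𝓝 0) := by
      refine squeeze_zero (fun j => norm_nonneg _) (fun j => (hIw j).le)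
        tendsto_one_div_add_atTop_nhds_zero_nat
    simpa using h1.add h2
  have hμ0 : Tendsto μ atTop (𝓝 0) := by
    refine squeeze_zero (fun j => (hμpos j).le) (fun j => ?_) (by simpa using hs0.const_mul 2)
    have h1 : c1 j ≤ s j := by
      rw [hc1]; simp only
      nlinarith [(hθI j).1, (hθI j).2, (hs j)]
    have h2 : c2 j ≤ s j := by
      rw [hc2]; simp only
      nlinarith [(hθI j).1, (hθI j).2, ht (I j), hIt j]
    have : μ j = c1 j + c2 j := rfl
    rw [this]; linarith
  exact ⟨μ, d, hμpos, hμ0, hdten, hpt⟩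

lemma inner_bound {A w : E} (hA : A ≠ 0) {lam : ℝ} {σ : ℕ → ℝ} {ω : ℕ → E}
    (hσpos : ∀ᶠ k in atTop, 0 < σ k) (hσ0 : Tendsto σ atTop (𝓝 0))
    (hω : Tendsto ω atTop (𝓝 w))
    (hineq : ∀ᶠ k in atTop, ‖A‖ - lam * (σ k * ‖ω k‖) ≤ ‖A + σ k • ω k‖) :
    -(lam * ‖w‖) * ‖A‖ ≤ ⟪A, w⟫ := by
  have hApos : 0 < ‖A‖ := norm_pos_iff.mpr hA
  set q : ℕ → ℝ := fun k =>
    (2 * ⟪A, ω k⟫ + σ k * ‖ω k‖ ^ 2) / (‖A + σ k • ω k‖ + ‖A‖) with hq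
  have hden : Tendsto (fun k => ‖A + σ k • ω k‖ + ‖A‖) atTop (𝓝 (‖A‖ + ‖A‖)) := by
    have h1 : Tendsto (fun k => σ k • ω k) atTop (𝓝 ((0:ℝ) • w)) := hσ0.smul hω
    rw [zero_smul] at h1
    have h2 : Tendsto (fun k => A + σ k • ω k) atTop (𝓝 (A + 0)) :=
      tendsto_const_nhds.add h1
    rw [add_zero] at h2
    exact h2.norm.add tendsto_const_nhds
  have hnum : Tendsto (fun k => 2 * ⟪A, ω k⟫ + σ k * ‖ω k‖ ^ 2) atTop (𝓝 (2 * ⟪A, w⟫)) := by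
    have h1 : Tendsto (fun k => ⟪A, ω k⟫) atTop (𝓝 ⟪A, w⟫) :=
      (tendsto_const_nhds : Tendsto (fun _ : ℕ => A) atTop (𝓝 A)).inner hω
    have h2 : Tendsto (fun k => σ k * ‖ω k‖ ^ 2) atTop (𝓝 (0 * ‖w‖ ^ 2)) :=
      hσ0.mul ((hω.norm).pow 2)
    rw [zero_mul] at h2
    have := (h1.const_mul 2).add h2
    rwa [add_zero] at this
  have hqlim : Tendsto q atTop (𝓝 ((2 * ⟪A, w⟫) / (‖A‖ + ‖A‖))) :=
    hnum.div hden (by positivity)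
  have hqineq : ∀ᶠ k in atTop, -(lam * ‖ω k‖) ≤ q k := by
    filter_upwards [hσpos, hineq] with k hk1 hk2
    have hdenk : 0 < ‖A + σ k • ω k‖ + ‖A‖ := by positivity
    have hsq : ‖A + σ k • ω k‖ ^ 2 =
        ‖A‖ ^ 2 + σ k * (2 * ⟪A, ω k⟫) + σ k ^ 2 * ‖ω k‖ ^ 2 := by
      rw [norm_add_sq_real, real_inner_smul_right, norm_smul, Real.norm_eq_abs,
        abs_of_pos hk1]
      ring
    have key : σ k * (2 * ⟪A, ω k⟫ + σ k * ‖ω k‖ ^ 2) =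
        (‖A + σ k • ω k‖ - ‖A‖) * (‖A + σ k • ω k‖ + ‖A‖) := by
      nlinarith [hsq]
    have step : σ k * (-(lam * ‖ω k‖) * (‖A + σ k • ω k‖ + ‖A‖)) ≤
        σ k * (2 * ⟪A, ω k⟫ + σ k * ‖ω k‖ ^ 2) := by
      rw [key]
      have h3 : -(lam * (σ k * ‖ω k‖)) ≤ ‖A + σ k • ω k‖ - ‖A‖ := by linarith
      calc σ k * (-(lam * ‖ω k‖) * (‖A + σ k • ω k‖ + ‖A‖))
          = (-(lam * (σ k * ‖ω k‖))) * (‖A + σ k • ω k‖ + ‖A‖) := by ring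
        _ ≤ (‖A + σ k • ω k‖ - ‖A‖) * (‖A + σ k • ω k‖ + ‖A‖) := by
            exact mul_le_mul_of_nonneg_right h3 hdenk.le
    have step2 : -(lam * ‖ω k‖) * (‖A + σ k • ω k‖ + ‖A‖) ≤
        2 * ⟪A, ω k⟫ + σ k * ‖ω k‖ ^ 2 := le_of_mul_le_mul_left (by linarith) hk1
    rw [hq]
    exact (le_div_iff₀ hdenk).mpr step2
  have hlhs : Tendsto (fun k => -(lam * ‖ω k‖)) atTop (𝓝 (-(lam * ‖w‖))) := by
    have := (hω.norm).const_mul lam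
    exact this.neg
  have hfin : -(lam * ‖w‖) ≤ (2 * ⟪A, w⟫) / (‖A‖ + ‖A‖) :=
    le_of_tendsto_of_tendsto hlhs hqlim hqineq
  have heq : (2 * ⟪A, w⟫) / (‖A‖ + ‖A‖) = ⟪A, w⟫ / ‖A‖ := by
    rw [show ‖A‖ + ‖A‖ = 2 * ‖A‖ by ring, mul_div_mul_left _ _ (two_ne_zero)]
  rw [heq] at hfin
  calc -(lam * ‖w‖) * ‖A‖ ≤ (⟪A, w⟫ / ‖A‖) * ‖A‖ :=
        mul_le_mul_of_nonneg_right hfin hApos.le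
    _ = ⟪A, w⟫ := by field_simp

end AuxCross
section AuxTransversal

variable {E : Type*} [NormedAddCommGroup E] [InnerProductSpace ℝ E] [ProperSpace E]

lemma norm_tri3 (a b c : E) : ‖a - c‖ ≤ ‖a - b‖ + ‖b - c‖ := by
  simpa [dist_eq_norm] using dist_triangle a b c

lemma norm_le_pairNorm_left (v₁ v₂ : E) : ‖v₁‖ ≤ pairNorm v₁ v₂ := by
  rw [pairNorm]
  calc ‖v₁‖ = Real.sqrt (‖v₁‖ ^ 2) := (Real.sqrt_sq (norm_nonneg _)).symm
    _ ≤ Real.sqrt (‖v₁‖ ^ 2 + ‖v₂‖ ^ 2) := Real.sqrt_le_sqrt (by nlinarith [sq_nonneg ‖v₂‖])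

lemma norm_le_pairNorm_right (v₁ v₂ : E) : ‖v₂‖ ≤ pairNorm v₁ v₂ := by
  rw [pairNorm]
  calc ‖v₂‖ = Real.sqrt (‖v₂‖ ^ 2) := (Real.sqrt_sq (norm_nonneg _)).symm
    _ ≤ Real.sqrt (‖v₁‖ ^ 2 + ‖v₂‖ ^ 2) := Real.sqrt_le_sqrt (by nlinarith [sq_nonneg ‖v₁‖])

set_option maxHeartbeats 2000000 in
lemma transversality_estimate {K C : Set E} (hC : IsClosed C)
    {x : E} (hxC : x ∈ C) {N : Set E} (hN : N ∈ 𝓝 x) {c α : ℝ} (hc : 0 < c)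
    (hα : α ∈ Ico (0:ℝ) 1)
    (htr : ∀ x₁ ∈ (frontier K \ C) ∩ N, ∀ x₂ ∈ (frontier C \ frontier K) ∩ N,
      ∃ v₁ ∈ contingentCone (frontier K) x₁, ∃ v₂ ∈ contingentCone C x₂,
        pairNorm v₁ v₂ ≤ c * ‖x₁ - x₂‖ ∧ ‖(x₂ - x₁) - (v₁ - v₂)‖ ≤ α * ‖x₁ - x₂‖) :
    ∃ κ > 0, ∃ r₀ > 0, ∀ y ∈ frontier K \ C, ‖y - x‖ < r₀ →
      ∃ z ∈ frontier K ∩ frontier C, ‖z - y‖ ≤ κ * Metric.infDist y C := by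
  obtain ⟨hα0, hα1⟩ := hα
  set lam : ℝ := min (1/2) ((1 - α)/(3 * c)) with hlam_def
  have hlam_pos : 0 < lam := lt_min (by norm_num) (div_pos (by linarith) (by positivity))
  have hlam_half : lam ≤ 1/2 := min_le_left _ _
  have hlam_c : 2 * lam * c < 1 - α := by
    have h1 : lam ≤ (1 - α)/(3 * c) := min_le_right _ _
    have h2 : 2 * lam * c ≤ 2 * ((1 - α)/(3 * c)) * c := by nlinarith
    have h3 : 2 * ((1 - α)/(3 * c)) * c = 2 * (1 - α) / 3 := by field_simp
    nlinarith
  obtain ⟨ρ, hρpos, hρN⟩ := Metric.nhds_basis_closedBall.mem_iff.mp hN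
  set r₀ : ℝ := ρ * lam / (2 * (2 * lam + 1)) with hr₀_def
  have hr₀pos : 0 < r₀ := by positivity
  have hkey : 2 * r₀ * (2 * lam + 1) = ρ * lam := by
    rw [hr₀_def]; field_simp
  have hr₀leρ : r₀ ≤ ρ / 2 := by nlinarith [hr₀pos, hlam_pos, hρpos]
  set κ : ℝ := 1 + 1/lam with hκ_def
  have hκpos : 0 < κ := by positivity
  refine ⟨κ, hκpos, r₀, hr₀pos, ?_⟩
  rintro y₁ ⟨hy₁K, hy₁C⟩ hy₁x
  set d : ℝ := Metric.infDist y₁ C with hd_def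
  have hdpos : 0 < d := (hC.notMem_iff_infDist_pos ⟨x, hxC⟩ (x := y₁)).mp hy₁C
  have hdley : d ≤ ‖y₁ - x‖ := by
    rw [hd_def, ← dist_eq_norm]; exact Metric.infDist_le_dist_of_mem hxC
  have hdr₀ : d < r₀ := lt_of_le_of_lt hdley hy₁x
  obtain ⟨y₂, hy₂C, hy₂d⟩ := hC.exists_infDist_eq_dist ⟨x, hxC⟩ y₁
  have hy₂norm : ‖y₁ - y₂‖ = d := by rw [← dist_eq_norm, hd_def, hy₂d]
  set B : Set E := Metric.closedBall x ρ with hB_def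
  set W₁ : Set E := closure (frontier K \ C) ∩ B with hW₁_def
  set W₂ : Set E := C ∩ B with hW₂_def
  have hW₁cp : IsCompact W₁ := (isCompact_closedBall x ρ).inter_left isClosed_closure
  have hW₂cp : IsCompact W₂ := (isCompact_closedBall x ρ).inter_left hC
  set G : E × E → ℝ :=
    fun q => ‖q.1 - q.2‖ + lam * ‖q.1 - y₁‖ + lam * ‖q.2 - y₂‖ with hG_def
  have hGcont : Continuous G := by fun_prop
  have hy₁B : y₁ ∈ B := by
    rw [hB_def, Metric.mem_closedBall, dist_eq_norm]
    linarith [hr₀leρ, hρpos, hy₁x]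
  have hy₂B : y₂ ∈ B := by
    rw [hB_def, Metric.mem_closedBall, dist_eq_norm]
    have h1 := norm_tri3 y₂ y₁ x
    have h2 : ‖y₂ - y₁‖ = d := by rw [norm_sub_rev]; exact hy₂norm
    nlinarith [hρpos, hr₀leρ, hy₁x, hdr₀]
  have hWne : ((y₁, y₂) : E × E) ∈ W₁ ×ˢ W₂ :=
    ⟨⟨subset_closure ⟨hy₁K, hy₁C⟩, hy₁B⟩, ⟨hy₂C, hy₂B⟩⟩
  obtain ⟨p, hpW, hpmin⟩ :=
    (hW₁cp.prod hW₂cp).exists_isMinOn ⟨_, hWne⟩ hGcont.continuousOn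
  have hmin : ∀ q ∈ W₁ ×ˢ W₂, G p ≤ G q := isMinOn_iff.mp hpmin
  obtain ⟨⟨hp₁cl, hp₁B⟩, hp₂C, hp₂B⟩ := hpW
  set p₁ : E := p.1 with hp₁_def
  set p₂ : E := p.2 with hp₂_def
  have hGp : G p = ‖p₁ - p₂‖ + lam * ‖p₁ - y₁‖ + lam * ‖p₂ - y₂‖ := rfl
  have hGpd : G p ≤ d := by
    have h := hmin (y₁, y₂) hWne
    have h2 : G (y₁, y₂) = d + lam * 0 + lam * 0 := by
      simp [hG_def, hy₂norm]
    rw [h2] at h; linarith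
  have hn1 : (0:ℝ) ≤ ‖p₁ - p₂‖ := norm_nonneg _
  have hn2 : (0:ℝ) ≤ ‖p₁ - y₁‖ := norm_nonneg _
  have hn3 : (0:ℝ) ≤ ‖p₂ - y₂‖ := norm_nonneg _
  have hGpd' : ‖p₁ - p₂‖ + lam * ‖p₁ - y₁‖ + lam * ‖p₂ - y₂‖ ≤ d := by
    rw [← hGp]; exact hGpd
  have hterm1 : ‖p₁ - p₂‖ ≤ d := by
    linarith [mul_nonneg hlam_pos.le hn2, mul_nonneg hlam_pos.le hn3]
  have hterm2 : lam * ‖p₁ - y₁‖ ≤ d := by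
    linarith [mul_nonneg hlam_pos.le hn3]
  have hterm3 : lam * ‖p₂ - y₂‖ ≤ d := by
    linarith [mul_nonneg hlam_pos.le hn2]
  have hp₁K : p₁ ∈ frontier K := by
    have hsub : closure (frontier K \ C) ⊆ frontier K :=
      calc closure (frontier K \ C) ⊆ closure (frontier K) := closure_mono diff_subset
        _ = frontier K := isClosed_frontier.closure_eq
    exact hsub hp₁cl
  have hp₁Cc : p₁ ∈ closure Cᶜ :=
    (closure_mono (fun z hz => hz.2 : frontier K \ C ⊆ Cᶜ)) hp₁cl
  have hhalf : lam * (ρ / 2) = 2 * lam * r₀ + r₀ := by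
    have h2l : (2 * (2 * lam + 1)) ≠ 0 := by positivity
    rw [hr₀_def]; field_simp
  have hlamr : lam * ‖y₁ - x‖ ≤ lam * r₀ := mul_le_mul_of_nonneg_left hy₁x.le hlam_pos.le
  have hp₁x : ‖p₁ - x‖ ≤ ρ / 2 := by
    have h1 := norm_tri3 p₁ y₁ x
    have h2 : lam * ‖p₁ - x‖ ≤ lam * (‖p₁ - y₁‖ + ‖y₁ - x‖) :=
      mul_le_mul_of_nonneg_left h1 hlam_pos.le
    rw [mul_add] at h2
    have h3 : lam * ‖p₁ - x‖ ≤ lam * (ρ / 2) := by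
      rw [hhalf]
      have := mul_pos hlam_pos hr₀pos
      linarith [hterm2, hlamr, hdr₀]
    exact le_of_mul_le_mul_left h3 hlam_pos
  have hp₂x : ‖p₂ - x‖ ≤ ρ / 2 := by
    have h1 := norm_tri3 p₂ y₂ x
    have h1' := norm_tri3 y₂ y₁ x
    have h2eq : ‖y₂ - y₁‖ = d := by rw [norm_sub_rev]; exact hy₂norm
    have h2 : lam * ‖p₂ - x‖ ≤ lam * (‖p₂ - y₂‖ + ‖y₂ - y₁‖ + ‖y₁ - x‖) := by
      apply mul_le_mul_of_nonneg_left _ hlam_pos.le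
      linarith
    rw [mul_add, mul_add] at h2
    have hlamd : lam * ‖y₂ - y₁‖ ≤ lam * r₀ := by
      rw [h2eq]
      exact mul_le_mul_of_nonneg_left hdr₀.le hlam_pos.le
    have h3 : lam * ‖p₂ - x‖ ≤ lam * (ρ / 2) := by
      rw [hhalf]
      linarith [hterm3, hlamr, hlamd, hdr₀]
    exact le_of_mul_le_mul_left h3 hlam_pos
  have hp₁Ball : p₁ ∈ B := by
    rw [hB_def, Metric.mem_closedBall, dist_eq_norm]; linarith
  have hp₂Ball : p₂ ∈ B := by
    rw [hB_def, Metric.mem_closedBall, dist_eq_norm]; linarith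
  by_cases hp₁C : p₁ ∈ C
  · -- p₁ ∈ frontier K ∩ frontier C, done
    refine ⟨p₁, ⟨hp₁K, ?_, by rwa [closure_compl] at hp₁Cc⟩, ?_⟩
    · exact subset_closure hp₁C
    · have hκd : κ * d = d + d / lam := by rw [hκ_def]; ring
      have hdiv : ‖p₁ - y₁‖ ≤ d / lam := by
        rw [le_div_iff₀ hlam_pos]
        linarith [hterm2, mul_comm lam ‖p₁ - y₁‖]
      rw [hκd]
      linarith [hdpos.le]
  · have hp₁KC : p₁ ∈ frontier K \ C := ⟨hp₁K, hp₁C⟩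
    have hAne : p₁ - p₂ ≠ 0 := sub_ne_zero.mpr (fun h => hp₁C (h ▸ hp₂C))
    have hAnorm : 0 < ‖p₁ - p₂‖ := norm_pos_iff.mpr hAne
    by_cases hp₂int : p₂ ∈ interior C
    · -- impossible: descend towards p₁
      exfalso
      obtain ⟨ε, hεpos, hεball⟩ := Metric.mem_nhds_iff.mp (mem_interior_iff_mem_nhds.mp hp₂int)
      set s : ℝ := min (min (‖p₁ - p₂‖/2) (ρ/4)) (ε/2) with hs_def
      have hspos : 0 < s := lt_min (lt_min (by positivity) (by positivity)) (by positivity)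
      have hsA : s ≤ ‖p₁ - p₂‖/2 := le_trans (min_le_left _ _) (min_le_left _ _)
      have hsρ : s ≤ ρ/4 := le_trans (min_le_left _ _) (min_le_right _ _)
      have hsε : s ≤ ε/2 := min_le_right _ _
      set q₂ : E := p₂ + s • (‖p₁ - p₂‖⁻¹ • (p₁ - p₂)) with hq₂_def
      have hq₂p₂ : ‖q₂ - p₂‖ = s := by
        rw [hq₂_def, add_sub_cancel_left, norm_smul, norm_smul, Real.norm_eq_abs,
          Real.norm_eq_abs, abs_of_pos hspos, abs_of_pos (inv_pos.mpr hAnorm),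
          inv_mul_cancel₀ hAnorm.ne', mul_one]
      have hq₂C : q₂ ∈ C := by
        apply hεball
        rw [Metric.mem_ball, dist_eq_norm, hq₂p₂]
        linarith
      have hq₂B : q₂ ∈ B := by
        rw [hB_def, Metric.mem_closedBall, dist_eq_norm]
        have := norm_tri3 q₂ p₂ x
        rw [hq₂p₂] at this
        linarith
      have hs1 : s * ‖p₁ - p₂‖⁻¹ ≤ 1/2 := by
        have h2 : (‖p₁ - p₂‖/2) * ‖p₁ - p₂‖⁻¹ = 1/2 := by
          rw [div_mul_eq_mul_div, mul_inv_cancel₀ hAnorm.ne']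
        rw [← h2]
        exact mul_le_mul_of_nonneg_right hsA (inv_pos.mpr hAnorm).le
      have hpos1 : 0 < 1 - s * ‖p₁ - p₂‖⁻¹ := by linarith
      have hp₁q₂ : ‖p₁ - q₂‖ = ‖p₁ - p₂‖ - s := by
        have h1 : p₁ - q₂ = (1 - s * ‖p₁ - p₂‖⁻¹) • (p₁ - p₂) := by
          rw [hq₂_def, smul_smul, sub_smul, one_smul]; abel
        rw [h1, norm_smul, Real.norm_eq_abs, abs_of_pos hpos1, sub_mul, one_mul,
          mul_assoc, inv_mul_cancel₀ hAnorm.ne', mul_one]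
      have hle := hmin (p₁, q₂) ⟨⟨hp₁cl, hp₁B⟩, hq₂C, hq₂B⟩
      have hGq : G (p₁, q₂) = ‖p₁ - q₂‖ + lam * ‖p₁ - y₁‖ + lam * ‖q₂ - y₂‖ := rfl
      have htriq : ‖q₂ - y₂‖ ≤ s + ‖p₂ - y₂‖ := by
        have := norm_tri3 q₂ p₂ y₂
        rw [hq₂p₂] at this; linarith
      rw [hGq, hp₁q₂, hGp] at hle
      have hdist : lam * ‖q₂ - y₂‖ ≤ lam * s + lam * ‖p₂ - y₂‖ := by
        have h3 := mul_le_mul_of_nonneg_left htriq hlam_pos.le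
        rw [mul_add] at h3; linarith
      have hls : lam * s ≤ (1/2) * s := mul_le_mul_of_nonneg_right hlam_half hspos.le
      linarith
    · -- p₂ ∈ frontier C
      have hp₂fr : p₂ ∈ frontier C := ⟨subset_closure hp₂C, hp₂int⟩
      by_cases hp₂K : p₂ ∈ frontier K
      · -- done with z := p₂
        refine ⟨p₂, ⟨hp₂K, hp₂fr⟩, ?_⟩
        have h1 := norm_tri3 p₂ y₂ y₁
        have h2 : ‖y₂ - y₁‖ = d := by rw [norm_sub_rev]; exact hy₂norm
        have hκd : κ * d = d + d / lam := by rw [hκ_def]; ring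
        have hdiv : ‖p₂ - y₂‖ ≤ d / lam := by
          rw [le_div_iff₀ hlam_pos]
          linarith [hterm3, mul_comm lam ‖p₂ - y₂‖]
        rw [hκd]
        linarith [hdpos.le]
      · -- transversality contradiction
        exfalso
        have hp₁N : p₁ ∈ N := hρN hp₁Ball
        have hp₂N : p₂ ∈ N := hρN hp₂Ball
        obtain ⟨v₁, hv₁, v₂, hv₂, hpair, herr⟩ :=
          htr p₁ ⟨hp₁KC, hp₁N⟩ p₂ ⟨⟨hp₂fr, hp₂K⟩, hp₂N⟩
        set A : E := p₁ - p₂ with hA_def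
        have hinfp₁ : 0 < Metric.infDist p₁ C :=
          (hC.notMem_iff_infDist_pos ⟨x, hxC⟩ (x := p₁)).mp hp₁C
        -- descent along v₁
        have hinner1 : -(lam * ‖v₁‖) * ‖A‖ ≤ ⟪A, v₁⟫ := by
          obtain ⟨σ, ω, hσp, hσ0, hωt, hωm⟩ := hv₁
          have hsz : Tendsto (fun k => σ k * ‖ω k‖) atTop (𝓝 0) := by
            have := hσ0.mul hωt.norm
            rwa [zero_mul] at this
          have hsmall : ∀ᶠ k in atTop,
              σ k * ‖ω k‖ < min (Metric.infDist p₁ C) (ρ/2) :=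
            hsz.eventually_mem (Iio_mem_nhds (lt_min hinfp₁ (by positivity)))
          apply inner_bound hAne (Eventually.of_forall hσp) hσ0 hωt
          filter_upwards [hsmall] with k hk
          set q₁ : E := p₁ + σ k • ω k with hq₁_def
          have hq₁p₁ : ‖q₁ - p₁‖ = σ k * ‖ω k‖ := by
            rw [hq₁_def, add_sub_cancel_left, norm_smul, Real.norm_eq_abs,
              abs_of_pos (hσp k)]
          have hq₁C : q₁ ∉ C := by
            intro hmem
            have h1 : Metric.infDist p₁ C ≤ dist p₁ q₁ :=
              Metric.infDist_le_dist_of_mem hmem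
            rw [dist_eq_norm, norm_sub_rev, hq₁p₁] at h1
            have := hk.trans_le (min_le_left _ _)
            linarith
          have hq₁B : q₁ ∈ B := by
            rw [hB_def, Metric.mem_closedBall, dist_eq_norm]
            have h1 := norm_tri3 q₁ p₁ x
            rw [hq₁p₁] at h1
            have := hk.trans_le (min_le_right _ _)
            linarith
          have hle := hmin (q₁, p₂) ⟨⟨subset_closure ⟨hωm k, hq₁C⟩, hq₁B⟩, hp₂C, hp₂B⟩
          have hGq : G (q₁, p₂) = ‖q₁ - p₂‖ + lam * ‖q₁ - y₁‖ + lam * ‖p₂ - y₂‖ := rfl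
          have htriq : ‖q₁ - y₁‖ ≤ σ k * ‖ω k‖ + ‖p₁ - y₁‖ := by
            have := norm_tri3 q₁ p₁ y₁
            rw [hq₁p₁] at this; linarith
          have hq₁p₂ : q₁ - p₂ = A + σ k • ω k := by
            rw [hq₁_def, hA_def]; abel
          rw [hGp, hGq, hq₁p₂] at hle
          have h2 : lam * ‖q₁ - y₁‖ ≤ lam * (σ k * ‖ω k‖ + ‖p₁ - y₁‖) :=
            mul_le_mul_of_nonneg_left htriq hlam_pos.le
          rw [mul_add] at h2
          linarith [hle, h2]
        -- descent along v₂
        have hinner2 : ⟪A, v₂⟫ ≤ lam * ‖v₂‖ * ‖A‖ := by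
          obtain ⟨σ, ω, hσp, hσ0, hωt, hωm⟩ := hv₂
          have hsz : Tendsto (fun k => σ k * ‖ω k‖) atTop (𝓝 0) := by
            have := hσ0.mul hωt.norm
            rwa [zero_mul] at this
          have hsmall : ∀ᶠ k in atTop, σ k * ‖ω k‖ < ρ/2 :=
            hsz.eventually_mem (Iio_mem_nhds (by positivity))
          have hbound : -(lam * ‖-v₂‖) * ‖A‖ ≤ ⟪A, -v₂⟫ := by
            apply inner_bound hAne (Eventually.of_forall hσp) hσ0 hωt.neg
            filter_upwards [hsmall] with k hk
            set q₂ : E := p₂ + σ k • ω k with hq₂_def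
            have hq₂p₂ : ‖q₂ - p₂‖ = σ k * ‖ω k‖ := by
              rw [hq₂_def, add_sub_cancel_left, norm_smul, Real.norm_eq_abs,
                abs_of_pos (hσp k)]
            have hq₂B : q₂ ∈ B := by
              rw [hB_def, Metric.mem_closedBall, dist_eq_norm]
              have h1 := norm_tri3 q₂ p₂ x
              rw [hq₂p₂] at h1
              linarith
            have hle := hmin (p₁, q₂) ⟨⟨hp₁cl, hp₁B⟩, hωm k, hq₂B⟩
            have hGq : G (p₁, q₂) = ‖p₁ - q₂‖ + lam * ‖p₁ - y₁‖ + lam * ‖q₂ - y₂‖ := rfl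
            have htriq : ‖q₂ - y₂‖ ≤ σ k * ‖ω k‖ + ‖p₂ - y₂‖ := by
              have := norm_tri3 q₂ p₂ y₂
              rw [hq₂p₂] at this; linarith
            have hq₂p₁ : p₁ - q₂ = A + σ k • (-ω k) := by
              rw [hq₂_def, hA_def, smul_neg]; abel
            rw [hGp, hGq, hq₂p₁] at hle
            have h2 : lam * ‖q₂ - y₂‖ ≤ lam * (σ k * ‖ω k‖ + ‖p₂ - y₂‖) :=
              mul_le_mul_of_nonneg_left htriq hlam_pos.le
            rw [mul_add] at h2
            simp only [Pi.neg_apply, norm_neg]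
            linarith [hle, h2]
          rw [norm_neg, inner_neg_right] at hbound
          linarith
        -- combine
        have hv1n : ‖v₁‖ ≤ c * ‖A‖ := (norm_le_pairNorm_left v₁ v₂).trans hpair
        have hv2n : ‖v₂‖ ≤ c * ‖A‖ := (norm_le_pairNorm_right v₁ v₂).trans hpair
        have hvdiff : v₁ - v₂ = -A - ((p₂ - p₁) - (v₁ - v₂)) := by
          rw [hA_def]; abel
        have hupper : ⟪A, v₁ - v₂⟫ ≤ -‖A‖^2 + α * ‖A‖^2 := by
          rw [hvdiff, inner_sub_right, inner_neg_right, real_inner_self_eq_norm_sq]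
          have h1 : |⟪A, (p₂ - p₁) - (v₁ - v₂)⟫| ≤ ‖A‖ * ‖(p₂ - p₁) - (v₁ - v₂)‖ :=
            abs_real_inner_le_norm _ _
          have h2 : ‖(p₂ - p₁) - (v₁ - v₂)‖ ≤ α * ‖A‖ := herr
          have h3 : ⟪A, (p₂ - p₁) - (v₁ - v₂)⟫ ≥ -(‖A‖ * (α * ‖A‖)) := by
            have := neg_abs_le ⟪A, (p₂ - p₁) - (v₁ - v₂)⟫
            nlinarith [norm_nonneg A]
          nlinarith
        have hlower : -(2 * lam * c) * ‖A‖^2 ≤ ⟪A, v₁ - v₂⟫ := by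
          rw [inner_sub_right]
          have e1 := mul_le_mul_of_nonneg_right
            (mul_le_mul_of_nonneg_left hv1n hlam_pos.le) (norm_nonneg A)
          have e2 := mul_le_mul_of_nonneg_right
            (mul_le_mul_of_nonneg_left hv2n hlam_pos.le) (norm_nonneg A)
          nlinarith [hinner1, hinner2, e1, e2]
        nlinarith [hlam_c, mul_pos hAnorm hAnorm, hupper, hlower]

end AuxTransversal
section AuxSpeeds
open scoped Pointwise

variable {E : Type*} [NormedAddCommGroup E] [InnerProductSpace ℝ E] [CompleteSpace E]

set_option maxHeartbeats 1000000 in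
lemma initialSpeeds_subset_F (F : E → Set E) (C : Set E) (hSA : StandingAssumption F C)
    (D : Set ℝ) (φ : ℝ → E) (hsol : IsSolution F C D φ) {x : E} (hx0 : φ 0 = x)
    (hxC : x ∈ C) {T : ℝ} (hT : 0 < T) (hTD : Ioc 0 T ⊆ D) :
    initialSpeeds φ x ⊆ F x := by
  obtain ⟨hdom, hCmem, g, hgF, hgInt⟩ := hsol
  have hTmem : T ∈ D := hTD ⟨hT, le_refl T⟩
  obtain ⟨hgiT, -⟩ := hgInt T hTmem
  have hIoc : IntegrableOn g (Ioc 0 T) volume :=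
    (intervalIntegrable_iff_integrableOn_Ioc_of_le hT.le).mp hgiT
  have hIcc : IntegrableOn g (Icc 0 T) volume :=
    (integrableOn_Icc_iff_integrableOn_Ioc).mpr hIoc
  have hprim : ContinuousOn (fun s => ∫ u in (0:ℝ)..s, g u) (Icc 0 T) := by
    have := intervalIntegral.continuousOn_primitive_interval
      (μ := volume) (a := (0:ℝ)) (b := T) (f := g) (by rwa [uIcc_of_le hT.le])
    rwa [uIcc_of_le hT.le] at this
  have hat0 : Tendsto (fun s => ∫ u in (0:ℝ)..s, g u) (𝓝[Icc 0 T] 0) (𝓝 0) := by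
    have h := (hprim 0 ⟨le_refl 0, hT.le⟩)
    rw [ContinuousWithinAt, intervalIntegral.integral_same] at h
    exact h
  have hFne : (F x).Nonempty := hSA.nonempty_images x hxC
  have hFcl : IsClosed (F x) := hSA.closed_images x hxC
  have hFcx : Convex ℝ (F x) := hSA.convex_images x hxC
  intro v hv
  obtain ⟨t, htpos, ht0, hq⟩ := hv
  have key : ∀ ε > (0:ℝ), Metric.infDist v (F x) ≤ 2 * ε := by
    intro ε hε
    set U : Set E := F x + Metric.ball (0 : E) ε with hU_def
    have hUopen : IsOpen U := Metric.isOpen_ball.add_left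
    have hUF : F x ⊆ U := fun a ha => by
      rw [hU_def]
      exact ⟨a, ha, 0, by simpa using hε, by simp⟩
    have husc := (hSA.continuous x).2 U hUopen hUF
    obtain ⟨δ, hδpos, hδ⟩ := Metric.eventually_nhds_iff.mp husc
    obtain ⟨δ', hδ'pos, hδ'⟩ := (Metric.tendsto_nhdsWithin_nhds.mp hat0) δ hδpos
    set τ : ℝ := min T (δ'/2) with hτ_def
    have hτpos : 0 < τ := lt_min hT (by positivity)
    have hUcx : Convex ℝ (closure U) := (hFcx.add (convex_ball (0 : E) ε)).closure
    have hφmem : ∀ s ∈ Ioc (0:ℝ) τ, F (φ s) ⊆ U := by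
      intro s hs
      have hsD : s ∈ D := hTD ⟨hs.1, hs.2.trans (min_le_left _ _)⟩
      have hsIcc : s ∈ Icc 0 T := ⟨hs.1.le, hs.2.trans (min_le_left _ _)⟩
      have hsδ' : dist s 0 < δ' := by
        rw [Real.dist_eq, sub_zero, abs_of_pos hs.1]
        have := hs.2.trans (min_le_right _ _)
        linarith
      have hclose := hδ' hsIcc hsδ'
      obtain ⟨-, hφs⟩ := hgInt s hsD
      have hdist : dist (φ s) x < δ := by
        rw [hφs, hx0]
        simpa [dist_eq_norm] using hclose
      exact hδ hdist
    have hmem : ∀ᶠ i in atTop, (t i)⁻¹ • (φ (t i) - x) ∈ closure U := by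
      have hev : ∀ᶠ i in atTop, t i < τ := ht0.eventually_mem (Iio_mem_nhds hτpos)
      filter_upwards [hev] with i hi
      have htiD : t i ∈ D := hTD ⟨htpos i, (hi.le.trans (min_le_left _ _))⟩
      obtain ⟨-, hφti⟩ := hgInt (t i) htiD
      have hvol0 : volume (Ioc (0:ℝ) (t i)) ≠ 0 := by
        rw [Real.volume_Ioc]
        simp only [sub_zero, ne_eq, ENNReal.ofReal_eq_zero, not_le]
        exact htpos i
      have hvolT : volume (Ioc (0:ℝ) (t i)) ≠ ⊤ := by
        rw [Real.volume_Ioc]; exact ENNReal.ofReal_ne_top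
      have hae : ∀ᵐ s ∂(volume.restrict (Ioc 0 (t i))), g s ∈ closure U := by
        have h1 : ∀ᵐ s ∂(volume.restrict (Ioc 0 (t i))), g s ∈ F (φ s) :=
          ae_restrict_of_ae_restrict_of_subset
            (fun s hs => hTD ⟨hs.1, hs.2.trans (hi.le.trans (min_le_left _ _))⟩) hgF
        have h2 := ae_restrict_mem (μ := volume) (measurableSet_Ioc (a := (0:ℝ)) (b := t i))
        filter_upwards [h1, h2] with s hs1 hs2
        refine subset_closure (hφmem s ⟨hs2.1, hs2.2.trans hi.le⟩ hs1)
      have hfi : IntegrableOn g (Ioc 0 (t i)) volume :=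
        hIoc.mono_set (fun s hs => ⟨hs.1, hs.2.trans (hi.le.trans (min_le_left _ _))⟩)
      have havg := hUcx.set_average_mem isClosed_closure hvol0 hvolT hae hfi
      rw [setAverage_eq] at havg
      have htoReal : (volume (Ioc (0:ℝ) (t i))).toReal = t i := by
        rw [Real.volume_Ioc, sub_zero, ENNReal.toReal_ofReal (htpos i).le]
      rw [measureReal_def, htoReal] at havg
      have hint_eq : ∫ s in Ioc (0:ℝ) (t i), g s = ∫ s in (0:ℝ)..(t i), g s :=
        (intervalIntegral.integral_of_le (htpos i).le).symm
      rw [hint_eq] at havg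
      have hφeq : φ (t i) - x = ∫ s in (0:ℝ)..(t i), g s := by
        rw [hφti, hx0]; abel
      rwa [hφeq]
    have hvU : v ∈ closure U := isClosed_closure.mem_of_tendsto hq hmem
    obtain ⟨w, hwU, hvw⟩ := Metric.mem_closure_iff.mp hvU ε hε
    obtain ⟨a, haF, b, hb, hab⟩ := hwU
    have : Metric.infDist v (F x) ≤ dist v a := Metric.infDist_le_dist_of_mem haF
    have hwb : dist w a ≤ ‖b‖ := by
      rw [← hab, dist_eq_norm]
      simp
    have hbε : ‖b‖ < ε := by simpa using hb
    calc Metric.infDist v (F x) ≤ dist v a := this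
      _ ≤ dist v w + dist w a := dist_triangle _ _ _
      _ ≤ dist v w + ‖b‖ := by linarith
      _ ≤ 2 * ε := by linarith
  have h0 : Metric.infDist v (F x) ≤ 0 := by
    by_contra hpos
    push_neg at hpos
    have := key (Metric.infDist v (F x) / 4) (by linarith)
    linarith
  have : Metric.infDist v (F x) = 0 := le_antisymm h0 Metric.infDist_nonneg
  exact (hFcl.mem_iff_infDist_zero hFne).mpr this

end AuxSpeeds
set_option maxHeartbeats 2000000 in
/-- Under Assumptions 1–3, if a solution starting from `x ∈ 𝒫` leaves
`K` immediately, then `cl(F_φ(x)) ⊆ T_{∂K ∩ C}(x) \ T_{∂K \ int C}(x)`. -/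
theorem clInitialSpeeds_subset {n : ℕ} (F : Euc n → Set (Euc n)) (C K : Set (Euc n))
    (hSA : StandingAssumption F C) (hK : IsClosed K)
    (h1 : Assumption1 F K C) (h2 : Assumption2 F K C) (h3 : Assumption3 K C)
    (D : Set ℝ) (φ : ℝ → Euc n) (hsol : IsSolution F C D φ)
    (x : Euc n) (hx0 : φ 0 = x) (hxP : x ∈ critSet K C)
    (hleave : LeavesImmediately K C D φ) :
    closure (initialSpeeds φ x) ⊆
      contingentCone (frontier K ∩ C) x \ contingentCone (frontier K \ interior C) x := by
  obtain ⟨T, hTpos, hTD, hTleave⟩ := hleave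
  have hCc : IsClosed C := hSA.closed_C
  have hxC : x ∈ C := by
    have := frontier_subset_closure (s := C) hxP.1.2
    rwa [hCc.closure_eq] at this
  obtain ⟨hKadj, hCadj, N, hN, c, hc, α, hα, htr⟩ := h3 x hxP
  obtain ⟨κ, hκpos, r₀, hr₀pos, hG1⟩ := transversality_estimate hCc hxC hN hc hα htr
  intro v hvcl
  have hv : v ∈ initialSpeeds φ x := closure_initialSpeeds_subset φ x hvcl
  have hvF : v ∈ F x := initialSpeeds_subset_F F C hSA D φ hsol hx0 hxC hTpos hTD hv
  obtain ⟨t, htpos, ht0, hq⟩ := hv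
  set w : ℕ → Euc n := fun i => (t i)⁻¹ • (φ (t i) - x) with hw_def
  have hwten : Tendsto w atTop (𝓝 v) := hq
  have hφt : ∀ i, x + t i • w i = φ (t i) := by
    intro i
    rw [hw_def]
    simp only
    rw [smul_inv_smul₀ (htpos i).ne']
    abel
  obtain ⟨N₀, hN₀⟩ := eventually_atTop.mp (ht0.eventually_mem (Iio_mem_nhds hTpos))
  set t1 : ℕ → ℝ := fun i => t (i + N₀) with ht1_def
  set w1 : ℕ → Euc n := fun i => w (i + N₀) with hw1_def
  have ht1pos : ∀ i, 0 < t1 i := fun i => htpos _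
  have ht10 : Tendsto t1 atTop (𝓝 0) := ht0.comp (tendsto_add_atTop_nat N₀)
  have hw1ten : Tendsto w1 atTop (𝓝 v) := hwten.comp (tendsto_add_atTop_nat N₀)
  have ht1T : ∀ i, t1 i ∈ Ioc 0 T := fun i => ⟨htpos _, (hN₀ _ (Nat.le_add_left _ _)).le⟩
  have hφ1 : ∀ i, x + t1 i • w1 i = φ (t1 i) := fun i => hφt _
  have hCK : ∀ i, φ (t1 i) ∈ C \ K := fun i => hTleave _ (ht1T i)
  -- (iv): v is not in the contingent cone of ∂K ∩ ∂C
  have hIV : v ∉ contingentCone (frontier K ∩ frontier C) x := by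
    intro hmem
    have hmem2 : v ∈ F x ∩ contingentCone (frontier K ∩ frontier C) x := ⟨hvF, hmem⟩
    rw [h2 x hxP] at hmem2
    exact hmem2
  -- v ∈ T_K(x)
  have hvTK : v ∈ contingentCone K x := h1 x hxP hvF
  -- v ∈ T_{∂K}(x) via crossing
  have hvTfK : v ∈ contingentCone (frontier K) x :=
    mem_contingent_frontier_of_inner_outer hK hvTK ht1pos ht10 hw1ten
      (fun i => by rw [hφ1 i]; exact (hCK i).2)
  -- v ∈ T_C(x)
  have hvTC : v ∈ contingentCone C x :=
    ⟨t1, w1, ht1pos, ht10, hw1ten, fun i => by rw [hφ1 i]; exact (hCK i).1⟩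
  have hvAC : v ∈ adjacentCone C x := by rw [← hCadj]; exact hvTC
  have hvAK : v ∈ adjacentCone (frontier K) x := by rw [← hKadj]; exact hvTfK
  -- G1 corollary
  have factG1 : ∀ (r : ℕ → ℝ) (a b : ℕ → Euc n), (∀ m, 0 < r m) →
      Tendsto r atTop (𝓝 0) → Tendsto a atTop (𝓝 v) → Tendsto b atTop (𝓝 v) →
      (∀ᶠ m in atTop, x + r m • a m ∈ frontier K \ C) →
      (∀ m, x + r m • b m ∈ C) →
      v ∈ contingentCone (frontier K ∩ frontier C) x := by
    intro r a b hrpos hr0 haten hbten hamem hbmem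
    have habten : Tendsto (fun m => ‖a m - b m‖) atTop (𝓝 0) := by
      have := (haten.sub hbten).norm
      simpa using this
    have hyx : Tendsto (fun m => ‖(x + r m • a m) - x‖) atTop (𝓝 0) := by
      have h1 : ∀ m, ‖(x + r m • a m) - x‖ = r m * ‖a m‖ := by
        intro m
        rw [add_sub_cancel_left, norm_smul, Real.norm_eq_abs, abs_of_pos (hrpos m)]
      have h2 : Tendsto (fun m => r m * ‖a m‖) atTop (𝓝 0) := by
        have := hr0.mul haten.norm
        rwa [zero_mul] at this
      exact h2.congr (fun m => (h1 m).symm)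
    have hsmall : ∀ᶠ m in atTop, ‖(x + r m • a m) - x‖ < r₀ :=
      hyx.eventually_mem (Iio_mem_nhds hr₀pos)
    have hexz : ∀ᶠ m in atTop, ∃ z, (z ∈ frontier K ∩ frontier C) ∧
        ‖z - (x + r m • a m)‖ ≤ κ * (r m * ‖a m - b m‖) := by
      filter_upwards [hamem, hsmall] with m hm1 hm2
      obtain ⟨z, hz1, hz2⟩ := hG1 _ hm1 hm2
      refine ⟨z, hz1, hz2.trans ?_⟩
      have hinf : Metric.infDist (x + r m • a m) C ≤ r m * ‖a m - b m‖ := by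
        have h3 : dist (x + r m • a m) (x + r m • b m) = r m * ‖a m - b m‖ := by
          rw [dist_eq_norm]
          have : (x + r m • a m) - (x + r m • b m) = r m • (a m - b m) := by
            rw [smul_sub]; abel
          rw [this, norm_smul, Real.norm_eq_abs, abs_of_pos (hrpos m)]
        rw [← h3]
        exact Metric.infDist_le_dist_of_mem (hbmem m)
      exact mul_le_mul_of_nonneg_left hinf hκpos.le
    obtain ⟨M, hM⟩ := eventually_atTop.mp hexz
    choose ζ hζmem hζcl using fun m => hM (m + M) (Nat.le_add_left _ _)
    set r' : ℕ → ℝ := fun m => r (m + M) with hr'_def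
    set w'' : ℕ → Euc n := fun m => (r' m)⁻¹ • (ζ m - x) with hw''_def
    have hr'pos : ∀ m, 0 < r' m := fun m => hrpos _
    have hr'0 : Tendsto r' atTop (𝓝 0) := hr0.comp (tendsto_add_atTop_nat M)
    have hmem' : ∀ m, x + r' m • w'' m ∈ frontier K ∩ frontier C := by
      intro m
      rw [hw''_def]
      simp only
      rw [smul_inv_smul₀ (hr'pos m).ne']
      have : x + (ζ m - x) = ζ m := by abel
      rw [this]
      exact hζmem m
    have hwa : ∀ m, ‖w'' m - a (m + M)‖ ≤ κ * ‖a (m + M) - b (m + M)‖ := by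
      intro m
      have h1 : w'' m - a (m + M) = (r' m)⁻¹ • (ζ m - (x + r' m • a (m + M))) := by
        have h0 : (r' m)⁻¹ • (r' m • a (m + M)) = a (m + M) := by
          rw [smul_smul, inv_mul_cancel₀ (hr'pos m).ne', one_smul]
        calc w'' m - a (m + M)
            = (r' m)⁻¹ • (ζ m - x) - (r' m)⁻¹ • (r' m • a (m + M)) := by
              rw [hw''_def, h0]
          _ = (r' m)⁻¹ • ((ζ m - x) - r' m • a (m + M)) := by module
          _ = (r' m)⁻¹ • (ζ m - (x + r' m • a (m + M))) := by
              congr 1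
              abel
      rw [h1, norm_smul, Real.norm_eq_abs, abs_of_pos (inv_pos.mpr (hr'pos m))]
      have h2 := hζcl m
      calc (r' m)⁻¹ * ‖ζ m - (x + r' m • a (m + M))‖
          ≤ (r' m)⁻¹ * (κ * (r' m * ‖a (m + M) - b (m + M)‖)) :=
            mul_le_mul_of_nonneg_left h2 (inv_pos.mpr (hr'pos m)).le
        _ = ((r' m)⁻¹ * r' m) * (κ * ‖a (m + M) - b (m + M)‖) := by ring
        _ = κ * ‖a (m + M) - b (m + M)‖ := by
            rw [inv_mul_cancel₀ (hr'pos m).ne', one_mul]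
    have hw''ten : Tendsto w'' atTop (𝓝 v) := by
      rw [tendsto_iff_norm_sub_tendsto_zero]
      have hgten : Tendsto
          (fun m => κ * ‖a (m + M) - b (m + M)‖ + ‖a (m + M) - v‖) atTop (𝓝 0) := by
        have h1 : Tendsto (fun m => ‖a (m + M) - b (m + M)‖) atTop (𝓝 0) :=
          habten.comp (tendsto_add_atTop_nat M)
        have h2 : Tendsto (fun m => ‖a (m + M) - v‖) atTop (𝓝 0) := by
          have h3 : Tendsto (fun m => a (m + M)) atTop (𝓝 v) :=
            haten.comp (tendsto_add_atTop_nat M)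
          rw [← tendsto_iff_norm_sub_tendsto_zero]
          exact h3
        have := (h1.const_mul κ).add h2
        simpa using this
      refine squeeze_zero (fun m => norm_nonneg _) (fun m => ?_) hgten
      calc ‖w'' m - v‖ ≤ ‖w'' m - a (m + M)‖ + ‖a (m + M) - v‖ := norm_tri3 _ _ _
        _ ≤ κ * ‖a (m + M) - b (m + M)‖ + ‖a (m + M) - v‖ := by
            linarith [hwa m]
    exact ⟨r', w'', hr'pos, hr'0, hw''ten, hmem'⟩
  -- Part A
  obtain ⟨dd, hddten, hddmem⟩ := hvAK t1 ht1pos ht10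
  have partA : v ∈ contingentCone (frontier K ∩ C) x := by
    by_cases hfreq : ∃ᶠ i in atTop, x + t1 i • dd i ∈ C
    · exact mem_contingentCone_of_frequently ht1pos ht10 hddten
        (hfreq.mono fun i hi => ⟨hddmem i, hi⟩)
    · exfalso
      apply hIV
      apply factG1 t1 dd w1 ht1pos ht10 hddten hw1ten
      · filter_upwards [Filter.not_frequently.mp hfreq] with i hi
        exact ⟨hddmem i, hi⟩
      · intro i
        rw [hφ1 i]
        exact (hCK i).1
  -- Part B
  have partB : v ∉ contingentCone (frontier K \ interior C) x := by
    rintro ⟨r, e, hrpos, hr0, heten, hemem⟩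
    obtain ⟨bb, hbbten, hbbmem⟩ := hvAC r hrpos hr0
    by_cases hfreq2 : ∃ᶠ m in atTop, x + r m • e m ∈ C
    · apply hIV
      apply mem_contingentCone_of_frequently hrpos hr0 heten
      refine hfreq2.mono fun m hm => ?_
      exact ⟨(hemem m).1, subset_closure hm, (hemem m).2⟩
    · apply hIV
      apply factG1 r e bb hrpos hr0 heten hbbten
      · filter_upwards [Filter.not_frequently.mp hfreq2] with m hm
        exact ⟨(hemem m).1, hm⟩
      · exact hbbmem
  exact ⟨partA, partB⟩
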